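/- arXiv:2111.01986 — 4 statements merged into one kernel-verified Lean document; each statement's English description precedes it below -/
import Mathlib

section
/- Let S be a right denominator set in a ring R and let Q = RS⁻¹ be the right Ore localization of R at S, viewed as a left R-module via the canonical map R → Q. Let φ be a unary pp formula for left R-modules. (1) If φ(R) = 0 (R viewed as a left module over itself), then φ(Q) = 0. (2) If moreover every element of S is regular (neither a left nor a right zero divisor), then φ(R) = 0 if and only if φ(Q) = 0. -/
/-- A unary pp formula `∃ y (A y ≐ b x)` for left `R`-modules, given by matching
matrices `A : Matrix (Fin n) (Fin m) R` and `b : Fin n → R`. -/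
structure PPFormula (R : Type*) [Ring R] where
  n : ℕ
  m : ℕ
  A : Matrix (Fin n) (Fin m) R
  b : Fin n → R

/-- Flatness of a left module over a possibly noncommutative ring, phrased via the
standard equational criterion: every solution in `M` of a homogeneous system of linear
equations is a linear combination of solutions in `R`.  (Over a commutative ring this
is equivalent to `Module.Flat`, which at present requires commutativity in Mathlib.) -/
def IsFlatModule (R : Type*) [Ring R] (M : Type*) [AddCommGroup M] [Module R M] : Prop :=
  ∀ (n k : ℕ) (B : Matrix (Fin n) (Fin k) R) (x : Fin k → M),
    (∀ i, ∑ j, B i j • x j = 0) →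
    ∃ (l : ℕ) (a : Matrix (Fin k) (Fin l) R) (y : Fin l → M),
      (∀ j, x j = ∑ p, a j p • y p) ∧ ∀ i p, (∑ j, B i j * a j p) = 0

namespace PPFormula

variable {R : Type*} [Ring R]

/-- The pp subgroup defined by `φ` in a left `R`-module `M`. -/
def eval (φ : PPFormula R) (M : Type*) [AddCommGroup M] [Module R M] : Set M :=
  {x : M | ∃ y : Fin φ.m → M, ∀ i, (∑ j, φ.A i j • y j) = φ.b i • x}

/-- `φ` is high if it defines everything in every injective left `R`-module. -/
def IsHigh (φ : PPFormula R) : Prop :=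
  ∀ (E : Type*) [AddCommGroup E] [Module R E], Module.Injective R E → φ.eval E = Set.univ

/-- `φ` is low if it defines `0` in every flat left `R`-module. -/
def IsLow (φ : PPFormula R) : Prop :=
  ∀ (F : Type*) [AddCommGroup F] [Module R F], IsFlatModule R F → φ.eval F = {0}

/-- `φ` is bounded if a single nonzero scalar annihilates `φ(M)` in every module `M`. -/
def IsBounded (φ : PPFormula R) : Prop :=
  ∃ r : R, r ≠ 0 ∧ ∀ (M : Type*) [AddCommGroup M] [Module R M], ∀ x ∈ φ.eval M, r • x = 0

/-- `φ` is cobounded if a single nonzero scalar sends every module into `φ`. -/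
def IsCobounded (φ : PPFormula R) : Prop :=
  ∃ s : R, s ≠ 0 ∧ ∀ (M : Type*) [AddCommGroup M] [Module R M], ∀ x : M, s • x ∈ φ.eval M

end PPFormula

/-- A left `R`-module `M` is absolutely pure if it is pure in every extension,
purity being tested on unary pp formulas. -/
def IsAbsolutelyPure (R : Type*) [Ring R] (M : Type*) [AddCommGroup M] [Module R M] : Prop :=
  ∀ (N : Type*) [AddCommGroup N] [Module R N] (f : M →ₗ[R] N), Function.Injective f →
    ∀ ψ : PPFormula R, f ⁻¹' ψ.eval N = ψ.eval M

private lemma zero_mem_eval {R : Type*} [Ring R] (φ : PPFormula R)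
    (M : Type*) [AddCommGroup M] [Module R M] : (0 : M) ∈ φ.eval M :=
  ⟨0, fun i => by simp⟩

private lemma common_ann {R : Type*} [Ring R] (S : Submonoid R) {Q : Type*} [Ring Q]
    (f : R →+* Q) (hker : ∀ r : R, f r = 0 ↔ ∃ s : S, r * (s : R) = 0) :
    ∀ (n : ℕ) (u : Fin n → R), (∀ i, f (u i) = 0) → ∃ s : S, ∀ i, u i * (s : R) = 0 := by
  intro n
  induction n with
  | zero => exact fun u _ => ⟨1, fun i => i.elim0⟩
  | succ k ih =>
    intro u hu
    obtain ⟨s, hs⟩ := ih (fun i => u i.succ) (fun i => hu i.succ)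
    have h0 : f (u 0 * (s : R)) = 0 := by rw [map_mul, hu 0, zero_mul]
    obtain ⟨t, ht⟩ := (hker _).mp h0
    refine ⟨s * t, fun i => ?_⟩
    refine Fin.cases ?_ (fun j => ?_) i
    · rw [Submonoid.coe_mul, ← mul_assoc]; exact ht
    · rw [Submonoid.coe_mul, ← mul_assoc, hs j, zero_mul]

private lemma common_den {R : Type*} [Ring R] (S : Submonoid R)
    (oreCond : ∀ (r : R) (s : S), ∃ (r' : R) (s' : S), r * (s' : R) = (s : R) * r')
    {Q : Type*} [Ring Q] (f : R →+* Q)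
    (hfrac : ∀ q : Q, ∃ (r : R) (s : S), q * f s = f r) :
    ∀ (n : ℕ) (q : Fin n → Q), ∃ (c : Fin n → R) (s : S), ∀ i, q i * f s = f (c i) := by
  intro n
  induction n with
  | zero => exact fun q => ⟨fun i => i.elim0, 1, fun i => i.elim0⟩
  | succ k ih =>
    intro q
    obtain ⟨c, s, hc⟩ := ih (fun i => q i.succ)
    obtain ⟨r0, s0, h0⟩ := hfrac (q 0)
    obtain ⟨r', s', hs'⟩ := oreCond (s0 : R) s
    -- hs' : ↑s0 * ↑s' = ↑s * r'
    refine ⟨Fin.cons (r0 * (s' : R)) (fun j => c j * r'), s0 * s', fun i => ?_⟩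
    refine Fin.cases ?_ (fun j => ?_) i
    · simp only [Fin.cons_zero]
      rw [Submonoid.coe_mul, map_mul, ← mul_assoc, h0, ← map_mul]
    · simp only [Fin.cons_succ]
      rw [Submonoid.coe_mul, map_mul, ← map_mul f, hs', map_mul, ← mul_assoc, hc j, ← map_mul]

/-- Let `S` be a right denominator set in `R` (a submonoid satisfying the right Ore
condition and right reversibility) and let `Q = RS⁻¹` be the right Ore localization,
characterized by: images of elements of `S` are units, every element of `Q` is of the
form `f r * (f s)⁻¹`, and the kernel of `f : R → Q` is `{r | ∃ s ∈ S, r * s = 0}`.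
View `Q` as a left `R`-module via `f`.  Then for any unary pp formula `φ`:
(1) if `φ(R) = 0` then `φ(Q) = 0`; (2) if moreover every element of `S` is regular,
then `φ(R) = 0 ↔ φ(Q) = 0`. -/
theorem low_iff_low_in_oreLocalization {R : Type*} [Ring R] (S : Submonoid R)
    (oreCond : ∀ (r : R) (s : S), ∃ (r' : R) (s' : S), r * (s' : R) = (s : R) * r')
    (reversible : ∀ (r : R) (s : S), (s : R) * r = 0 → ∃ s' : S, r * (s' : R) = 0)
    (Q : Type*) [Ring Q] (f : R →+* Q)
    (hunit : ∀ s : S, IsUnit (f s))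
    (hfrac : ∀ q : Q, ∃ (r : R) (s : S), q * f s = f r)
    (hker : ∀ r : R, f r = 0 ↔ ∃ s : S, r * (s : R) = 0)
    (φ : PPFormula R) :
    letI : Module R Q := Module.compHom Q f
    (φ.eval R = {0} → φ.eval Q = {0}) ∧
    ((∀ s : S, (∀ r : R, (s : R) * r = 0 → r = 0) ∧ (∀ r : R, r * (s : R) = 0 → r = 0)) →
      (φ.eval R = {0} ↔ φ.eval Q = {0})) := by
  letI : Module R Q := Module.compHom Q f
  have hsmul : ∀ (r : R) (x : Q), r • x = f r * x := fun r x => rfl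
  have part1 : φ.eval R = {0} → φ.eval Q = {0} := by
    intro hR
    apply Set.eq_singleton_iff_unique_mem.mpr
    refine ⟨zero_mem_eval φ Q, fun x hx => ?_⟩
    obtain ⟨y, hy⟩ := hx
    obtain ⟨c, s, hc⟩ := common_den S oreCond f hfrac (φ.m + 1) (Fin.cons x y)
    set u : Fin φ.n → R := fun i => (∑ j, φ.A i j * c j.succ) - φ.b i * c 0 with hu_def
    have hfu : ∀ i, f (u i) = 0 := by
      intro i
      have h1 : f (∑ j, φ.A i j * c j.succ) = (∑ j, φ.A i j • y j) * f s := by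
        rw [map_sum, Finset.sum_mul]
        refine Finset.sum_congr rfl fun j _ => ?_
        rw [map_mul, ← hc j.succ, Fin.cons_succ, hsmul, mul_assoc]
      have h2 : f (φ.b i * c 0) = (φ.b i • x) * f s := by
        rw [map_mul, ← hc 0, Fin.cons_zero, hsmul, mul_assoc]
      rw [map_sub, h1, h2, hy i, sub_self]
    obtain ⟨t, ht⟩ := common_ann S f hker φ.n u hfu
    have hmem : c 0 * (t : R) ∈ φ.eval R := by
      refine ⟨fun j => c j.succ * (t : R), fun i => ?_⟩
      have := ht i
      rw [hu_def] at this
      have h3 : (∑ j, φ.A i j * c j.succ) * (t : R) = (φ.b i * c 0) * (t : R) := by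
        rw [← sub_eq_zero, ← sub_mul]; exact this
      calc (∑ j, φ.A i j • (c j.succ * (t : R)))
          = (∑ j, φ.A i j * c j.succ) * (t : R) := by
            rw [Finset.sum_mul]; exact Finset.sum_congr rfl fun j _ => by
              rw [smul_eq_mul, mul_assoc]
        _ = (φ.b i * c 0) * (t : R) := h3
        _ = φ.b i • (c 0 * (t : R)) := by rw [smul_eq_mul, mul_assoc]
    have hc0t : c 0 * (t : R) = 0 := by
      have := hR ▸ hmem
      simpa using this
    have hfc0 : f (c 0) = 0 := by
      have : f (c 0) * f t = 0 := by rw [← map_mul, hc0t, map_zero]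
      exact ((hunit t).mul_left_eq_zero).mp this
    have hx0 : x * f s = 0 := by
      have h := hc 0
      rw [Fin.cons_zero] at h
      rw [h, hfc0]
    exact ((hunit s).mul_left_eq_zero).mp hx0
  refine ⟨part1, fun hreg => ⟨part1, fun hQ => ?_⟩⟩
  apply Set.eq_singleton_iff_unique_mem.mpr
  refine ⟨zero_mem_eval φ R, fun x hx => ?_⟩
  obtain ⟨y, hy⟩ := hx
  have hmem : f x ∈ φ.eval Q := by
    refine ⟨fun j => f (y j), fun i => ?_⟩
    have := congrArg f (hy i)
    rw [map_sum] at this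
    simp only [smul_eq_mul, map_mul] at this
    simp only [hsmul]
    exact this
  have hfx : f x = 0 := by
    have := hQ ▸ hmem
    simpa using this
  obtain ⟨s, hs⟩ := (hker x).mp hfx
  exact (hreg s).2 x hs
end

section
/- Let R be a domain satisfying both the left and the right Ore condition. Then every torsionfree divisible left R-module is flat. -/
lemma one_row_aux {R : Type*} [Ring R] [IsDomain R]
    (rightOre : ∀ a b : R, a ≠ 0 → b ≠ 0 → ∃ u v : R, a * u = b * v ∧ a * u ≠ 0)
    {M : Type*} [AddCommGroup M] [Module R M]
    (torsionfree : ∀ (r : R) (x : M), r ≠ 0 → r • x = 0 → x = 0)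
    (divisible : ∀ (r : R), r ≠ 0 → ∀ x : M, ∃ y : M, r • y = x)
    (k : ℕ) (b : Fin k → R) (x : Fin k → M) (hx : ∑ j, b j • x j = 0) :
    ∃ (a : Matrix (Fin k) (Fin k) R) (y : Fin k → M),
      (∀ j, x j = ∑ p, a j p • y p) ∧ ∀ p, (∑ j, b j * a j p) = 0 := by
  by_cases hb : ∀ j, b j = 0
  · refine ⟨1, x, fun j => ?_, fun p => by simp [hb]⟩
    simp [Matrix.one_apply, ite_smul]
  · push_neg at hb
    obtain ⟨j0, hj0⟩ := hb
    have hex : ∀ p : Fin k, ∃ ut : R × R, b j0 * ut.1 = b p * ut.2 ∧ ut.2 ≠ 0 := by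
      intro p
      by_cases hp : b p = 0
      · exact ⟨(0, 1), by simp [hp], one_ne_zero⟩
      · obtain ⟨u, v, huv, hne⟩ := rightOre (b j0) (b p) hj0 hp
        exact ⟨(u, v), huv, fun hv => hne (by rw [huv, show v = 0 from hv, mul_zero])⟩
    choose ut hut htne using hex
    have hy : ∀ p, ∃ y, (ut p).2 • y = x p := fun p => divisible _ (htne p) (x p)
    choose y hy using hy
    set a : Matrix (Fin k) (Fin k) R := Matrix.of fun j p =>
      if p = j0 then 0 else if j = p then (ut p).2 else if j = j0 then -(ut p).1 else 0 with ha
    have main : x j0 = ∑ p, a j0 p • y p := by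
      set S := ∑ p, a j0 p • y p with hS
      have h1 : b j0 • S = ∑ p, (if p = j0 then (0:M) else -(b p • x p)) := by
        rw [hS, Finset.smul_sum]
        refine Finset.sum_congr rfl fun p _ => ?_
        by_cases hp : p = j0
        · simp [ha, hp]
        · have hpj : ¬ j0 = p := fun h => hp h.symm
          have hent : a j0 p = -(ut p).1 := by simp [ha, hp, hpj]
          rw [if_neg hp, hent, smul_smul, mul_neg, hut p, neg_smul, mul_smul, hy p]
      have h2 : ∑ p, (if p = j0 then (0:M) else -(b p • x p)) = b j0 • x j0 := by
        have hcong : ∀ p : Fin k, (if p = j0 then (0:M) else -(b p • x p))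
            = -(b p • x p) + (if p = j0 then b p • x p else 0) := by
          intro p; by_cases h : p = j0 <;> simp [h]
        rw [Finset.sum_congr rfl fun p _ => hcong p, Finset.sum_add_distrib,
          Finset.sum_ite_eq']
        simp [hx]
      have := torsionfree (b j0) (x j0 - S) hj0 (by rw [smul_sub, h1, h2, sub_self])
      exact (sub_eq_zero.mp this)
    refine ⟨a, y, ?_, ?_⟩
    · intro j
      by_cases hj : j = j0
      · rw [hj]; exact main
      · rw [Finset.sum_eq_single j]
        · have hent : a j j = (ut j).2 := by simp [ha, hj]
          rw [hent, hy j]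
        · intro p _ hp
          have hent : a j p = 0 := by
            by_cases hpj0 : p = j0
            · simp [ha, hpj0]
            · have : ¬ j = p := fun h => hp h.symm
              simp [ha, hpj0, this, hj]
          rw [hent, zero_smul]
        · intro h; exact absurd (Finset.mem_univ j) h
    · intro p
      by_cases hp : p = j0
      · simp [ha, hp]
      · have hpj : ¬ j0 = p := fun h => hp h.symm
        have entry : ∀ j, a j p = (if j = p then (ut p).2 else 0)
            + (if j = j0 then -(ut p).1 else 0) := by
          intro j
          by_cases hjp : j = p
          · have : ¬ j = j0 := by rw [hjp]; exact hp
            simp [ha, hp, hjp, this]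
          · by_cases hjj0 : j = j0 <;> simp [ha, hp, hjp, hjj0, hpj]
        calc ∑ j, b j * a j p
            = ∑ j, ((if j = p then b j * (ut p).2 else 0)
              + (if j = j0 then b j * -(ut p).1 else 0)) := by
              refine Finset.sum_congr rfl fun j _ => ?_
              simp [entry j, mul_add, mul_ite]
          _ = b p * (ut p).2 + b j0 * -(ut p).1 := by
              rw [Finset.sum_add_distrib, Finset.sum_ite_eq', Finset.sum_ite_eq']
              simp
          _ = 0 := by rw [mul_neg, hut p, add_neg_cancel]

private theorem flat_aux (R : Type*) [Ring R]
    [IsDomain R]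
    (leftOre : ∀ a b : R, a ≠ 0 → b ≠ 0 → ∃ u v : R, u * a = v * b ∧ u * a ≠ 0)
    (rightOre : ∀ a b : R, a ≠ 0 → b ≠ 0 → ∃ u v : R, a * u = b * v ∧ a * u ≠ 0)
    (M : Type*) [AddCommGroup M] [Module R M]
    (torsionfree : ∀ (r : R) (x : M), r ≠ 0 → r • x = 0 → x = 0)
    (divisible : ∀ (r : R), r ≠ 0 → ∀ x : M, ∃ y : M, r • y = x) :
    ∀ (n k : ℕ) (B : Matrix (Fin n) (Fin k) R) (x : Fin k → M),
    (∀ i, ∑ j, B i j • x j = 0) →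
    ∃ (l : ℕ) (a : Matrix (Fin k) (Fin l) R) (y : Fin l → M),
      (∀ j, x j = ∑ p, a j p • y p) ∧ ∀ i p, (∑ j, B i j * a j p) = 0 := by
  intro n
  induction n with
  | zero =>
    intro k B x _
    refine ⟨k, 1, x, fun j => ?_, fun i => i.elim0⟩
    simp [Matrix.one_apply, ite_smul]
  | succ n ih =>
    intro k B x h
    obtain ⟨a, y, hxy, hba⟩ :=
      one_row_aux rightOre torsionfree divisible k (fun j => B 0 j) x (h 0)
    set C : Matrix (Fin n) (Fin k) R := Matrix.of fun i p => ∑ j, B i.succ j * a j p with hC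
    have hCy : ∀ i, ∑ p, C i p • y p = 0 := by
      intro i
      calc ∑ p, C i p • y p
          = ∑ p, ∑ j, (B i.succ j * a j p) • y p := by
            refine Finset.sum_congr rfl fun p _ => ?_
            rw [show C i p = ∑ j, B i.succ j * a j p from rfl, Finset.sum_smul]
        _ = ∑ j, ∑ p, (B i.succ j * a j p) • y p := Finset.sum_comm
        _ = ∑ j, B i.succ j • x j := by
            refine Finset.sum_congr rfl fun j _ => ?_
            rw [hxy j, Finset.smul_sum]
            exact Finset.sum_congr rfl fun p _ => (smul_smul _ _ _).symm
        _ = 0 := h i.succ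
    obtain ⟨l, a', y', hyy', ha'⟩ := ih k C y hCy
    refine ⟨l, Matrix.of fun j p => ∑ q, a j q * a' q p, y', ?_, ?_⟩
    · intro j
      rw [hxy j]
      simp only [Matrix.of_apply]
      calc ∑ q, a j q • y q = ∑ q, a j q • ∑ p, a' q p • y' p := by
            exact Finset.sum_congr rfl fun q _ => by rw [hyy' q]
        _ = ∑ q, ∑ p, (a j q * a' q p) • y' p := by
            refine Finset.sum_congr rfl fun q _ => ?_
            rw [Finset.smul_sum]
            exact Finset.sum_congr rfl fun p _ => smul_smul _ _ _
        _ = ∑ p, (∑ q, a j q * a' q p) • y' p := by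
            rw [Finset.sum_comm]
            exact Finset.sum_congr rfl fun p _ => (Finset.sum_smul).symm
    · intro i p
      simp only [Matrix.of_apply]
      have swap : ∀ r : Fin k → R,
          ∑ j, r j * ∑ q, a j q * a' q p = ∑ q, (∑ j, r j * a j q) * a' q p := by
        intro r
        calc ∑ j, r j * ∑ q, a j q * a' q p
            = ∑ j, ∑ q, r j * a j q * a' q p := by
              refine Finset.sum_congr rfl fun j _ => ?_
              rw [Finset.mul_sum]
              exact Finset.sum_congr rfl fun q _ => (mul_assoc _ _ _).symm
          _ = ∑ q, ∑ j, r j * a j q * a' q p := Finset.sum_comm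
          _ = ∑ q, (∑ j, r j * a j q) * a' q p :=
              Finset.sum_congr rfl fun q _ => (Finset.sum_mul _ _ _).symm
      refine Fin.cases ?_ ?_ i
      · rw [swap (fun j => B 0 j)]
        simp [hba]
      · intro i'
        rw [swap (fun j => B i'.succ j)]
        have : ∀ q, ∑ j, B i'.succ j * a j q = C i' q := fun q => rfl
        calc ∑ q, (∑ j, B i'.succ j * a j q) * a' q p
            = ∑ q, C i' q * a' q p := Finset.sum_congr rfl fun q _ => by rw [this q]
          _ = 0 := ha' i' p



/-- Over a two-sided Ore domain, every torsionfree divisible left module is flat. -/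
theorem flat_of_torsionfree_divisible_of_twoSidedOreDomain (R : Type*) [Ring R]
    [IsDomain R]
    (leftOre : ∀ a b : R, a ≠ 0 → b ≠ 0 → ∃ u v : R, u * a = v * b ∧ u * a ≠ 0)
    (rightOre : ∀ a b : R, a ≠ 0 → b ≠ 0 → ∃ u v : R, a * u = b * v ∧ a * u ≠ 0)
    (M : Type*) [AddCommGroup M] [Module R M]
    (torsionfree : ∀ (r : R) (x : M), r ≠ 0 → r • x = 0 → x = 0)
    (divisible : ∀ (r : R), r ≠ 0 → ∀ x : M, ∃ y : M, r • y = x) :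
    IsFlatModule R M :=
  flat_aux R leftOre rightOre M torsionfree divisible
end

section
/- Let R be a domain satisfying both the left and the right Ore condition and let M be a torsionfree left R-module. Set U = {x ∈ M | ∀ r ≠ 0 in R, ∃ y ∈ M, r • y = x}. Then U is an R-submodule of M, U is injective as an R-module, U contains every injective submodule of M, and there exists a submodule N of M with M the internal direct sum of U and N (IsCompl U N) such that the only element of N divisible in N by every nonzero r ∈ R is 0. -/
/-- Let `R` be a two-sided Ore domain and `M` a torsionfree left `R`-module.  The set
`U = {x | ∀ r ≠ 0, r • y = x for some y}` (the first Ulm submodule of `M`) is an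
`R`-submodule, it is injective, it contains every injective submodule of `M`, and it
has a complement `N` (so `M = U ⊕ N` internally) in which `0` is the only element
divisible in `N` by every nonzero scalar (i.e. `N` is reduced). -/
theorem ulm_submodule_of_torsionfree_twoSidedOreDomain (R : Type*) [Ring R] [IsDomain R]
    (leftOre : ∀ a b : R, a ≠ 0 → b ≠ 0 → ∃ u v : R, u * a = v * b ∧ u * a ≠ 0)
    (rightOre : ∀ a b : R, a ≠ 0 → b ≠ 0 → ∃ u v : R, a * u = b * v ∧ a * u ≠ 0)
    (M : Type*) [AddCommGroup M] [Module R M]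
    (torsionfree : ∀ (r : R) (x : M), r ≠ 0 → r • x = 0 → x = 0) :
    ∃ U : Submodule R M,
      (U : Set M) = {x : M | ∀ r : R, r ≠ 0 → ∃ y : M, r • y = x} ∧
      Module.Injective R U ∧
      (∀ W : Submodule R M, Module.Injective R W → W ≤ U) ∧
      ∃ N : Submodule R M, IsCompl U N ∧
        ∀ x ∈ N, (∀ r : R, r ≠ 0 → ∃ y ∈ N, r • y = x) → x = 0 := by
  classical
  -- define U
  set Uset : Set M := {x : M | ∀ r : R, r ≠ 0 → ∃ y : M, r • y = x} with hUset
  have smul_mem' : ∀ (s : R) (x : M), x ∈ Uset → s • x ∈ Uset := by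
    intro s x hx r hr
    by_cases hs : s = 0
    · exact ⟨0, by simp [hs]⟩
    · obtain ⟨u, v, huv, hne⟩ := rightOre r s hr hs
      have hv : v ≠ 0 := by
        rintro rfl
        exact hne (by rw [huv, mul_zero])
      obtain ⟨z, hz⟩ := hx v hv
      refine ⟨u • z, ?_⟩
      rw [smul_smul, huv, ← smul_smul, hz]
  let U : Submodule R M :=
    { carrier := Uset
      zero_mem' := fun r hr => ⟨0, by simp⟩
      add_mem' := by
        intro a b ha hb r hr
        obtain ⟨y, hy⟩ := ha r hr
        obtain ⟨z, hz⟩ := hb r hr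
        exact ⟨y + z, by rw [smul_add, hy, hz]⟩
      smul_mem' := smul_mem' }
  -- strong divisibility: divisors of elements of U lie in U
  have strong : ∀ x ∈ U, ∀ r : R, r ≠ 0 → ∃ y ∈ U, r • y = x := by
    intro x hx r hr
    obtain ⟨y, hy⟩ := hx r hr
    refine ⟨y, ?_, hy⟩
    intro s hs
    obtain ⟨w, hw⟩ := hx (r * s) (mul_ne_zero hr hs)
    refine ⟨w, ?_⟩
    have : r • (s • w - y) = 0 := by
      rw [smul_sub, smul_smul, hw, hy, sub_self]
    have := torsionfree r _ hr this
    rwa [sub_eq_zero] at this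
  -- U is injective via Baer's criterion
  have baer : Module.Baer R U := by
    intro I g
    by_cases hI : ∀ a ∈ I, a = (0 : R)
    · refine ⟨0, fun x mem => ?_⟩
      have hx0 : x = 0 := hI x mem
      subst hx0
      have : (⟨(0 : R), mem⟩ : I) = 0 := rfl
      simp [this]
    · push_neg at hI
      obtain ⟨a, haI, ha⟩ := hI
      have hga : ((g ⟨a, haI⟩ : U) : M) ∈ U := (g ⟨a, haI⟩).2
      obtain ⟨u0, hu0U, hu0⟩ := strong _ hga a ha
      refine ⟨LinearMap.toSpanSingleton R U ⟨u0, hu0U⟩, fun b hb => ?_⟩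
      by_cases hbz : b = 0
      · subst hbz
        have : (⟨(0 : R), hb⟩ : I) = 0 := rfl
        rw [this, map_zero]
        simp [LinearMap.toSpanSingleton]
      · obtain ⟨s, t, hst, hne⟩ := leftOre b a hbz ha
        have hs : s ≠ 0 := by
          rintro rfl
          exact hne (by rw [zero_mul])
        have hsa : s • (⟨b, hb⟩ : I) = t • (⟨a, haI⟩ : I) := by
          apply Subtype.ext
          simpa [smul_eq_mul] using hst
        have e1 : s • (g ⟨b, hb⟩) = t • (g ⟨a, haI⟩) := by
          rw [← map_smul, ← map_smul, hsa]
        have e2 : s • ((g ⟨b, hb⟩ : U) : M) = t • ((g ⟨a, haI⟩ : U) : M) := by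
          rw [← Submodule.coe_smul, ← Submodule.coe_smul, e1]
        have e3 : s • ((g ⟨b, hb⟩ : U) : M) = s • (b • u0) := by
          rw [e2, ← hu0, smul_smul, smul_smul, hst]
        have e4 : ((g ⟨b, hb⟩ : U) : M) = b • u0 := by
          have h0 : s • (((g ⟨b, hb⟩ : U) : M) - b • u0) = 0 := by
            rw [smul_sub, e3, sub_self]
          have := torsionfree s _ hs h0
          rwa [sub_eq_zero] at this
        apply Subtype.ext
        rw [LinearMap.toSpanSingleton_apply]
        simpa using e4.symm
  refine ⟨U, rfl, baer.injective, ?_, ?_⟩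
  · -- every injective submodule is contained in U
    intro W hW x hx
    by_cases hx0 : x = 0
    · subst hx0
      exact U.zero_mem
    -- `R` is small in the universe of `M` since `s ↦ s • x` is injective
    have hinj : Function.Injective (fun s : R => s • x) := by
      intro s s' h
      by_contra hne
      have hss : s - s' ≠ 0 := sub_ne_zero.mpr hne
      have h' : s • x = s' • x := h
      have : (s - s') • x = 0 := by
        rw [sub_smul, h', sub_self]
      exact hx0 (torsionfree _ _ hss this)
    haveI : Small.{_, _} R := ⟨Set.range (fun s : R => s • x),
      ⟨Equiv.ofInjective _ hinj⟩⟩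
    have hbW : Module.Baer R W := Module.Baer.of_injective hW
    intro r hr
    let e : R →ₗ[R] R :=
      { toFun := fun s => s * r
        map_add' := fun s s' => add_mul s s' r
        map_smul' := fun c s => by simp [smul_eq_mul, mul_assoc] }
    have einj : Function.Injective e := fun s s' h => mul_right_cancel₀ hr h
    let equiv : R ≃ₗ[R] LinearMap.range e := LinearEquiv.ofInjective e einj
    let g : ↥(LinearMap.range e) →ₗ[R] W :=
      (LinearMap.toSpanSingleton R W ⟨x, hx⟩) ∘ₗ (equiv.symm : _ →ₗ[R] R)
    obtain ⟨g', hg'⟩ := hbW (LinearMap.range e) g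
    have hrI : r ∈ LinearMap.range e := ⟨1, one_mul r⟩
    have h1 : g' r = g ⟨r, hrI⟩ := hg' r hrI
    have h2 : equiv.symm ⟨r, hrI⟩ = 1 := by
      rw [LinearEquiv.symm_apply_eq]
      apply Subtype.ext
      simp [equiv, e]
    have h3 : g ⟨r, hrI⟩ = ⟨x, hx⟩ := by
      show LinearMap.toSpanSingleton R W ⟨x, hx⟩ (equiv.symm ⟨r, hrI⟩) = ⟨x, hx⟩
      rw [h2, LinearMap.toSpanSingleton_apply, one_smul]
    have h4 : g' r = r • g' 1 := by
      rw [← map_smul, smul_eq_mul, mul_one]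
    refine ⟨((g' 1 : W) : M), ?_⟩
    rw [← Submodule.coe_smul, ← h4, h1, h3]
  · -- complement
    have hUinj : Module.Injective R U := baer.injective
    obtain ⟨π, hπ⟩ := hUinj.out U.subtype Subtype.coe_injective LinearMap.id
    refine ⟨LinearMap.ker π, LinearMap.isCompl_of_proj hπ, ?_⟩
    intro x hxN hdiv
    have hxU : x ∈ U := fun r hr => by
      obtain ⟨y, _, hy⟩ := hdiv r hr
      exact ⟨y, hy⟩
    have hdisj := (LinearMap.isCompl_of_proj hπ).disjoint
    exact (Submodule.disjoint_def.mp hdisj) x hxU hxN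
end

section
/- Let R be a domain satisfying both the left and the right Ore condition, and let M be a divisible left R-module. Suppose M has a maximal pp subgroup, i.e., there is a unary pp formula φ with φ(M) ≠ M such that for every unary pp formula ψ with φ(M) ⊆ ψ(M) one has ψ(M) = φ(M) or ψ(M) = M. Then M is pp-simple (every pp subgroup of M equals 0 or M) and torsionfree. -/
section Aux

variable {R : Type*} [Ring R]

private lemma ppf_zero_mem {M : Type*} [AddCommGroup M] [Module R M] (ψ : PPFormula R) :
    (0 : M) ∈ ψ.eval M :=
  ⟨0, fun i => by simp⟩

private lemma ppf_kill {M : Type*} [AddCommGroup M] [Module R M] (ψ : PPFormula R)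
    (l : Fin ψ.n → R) (hl : ∀ j, ∑ i, l i * ψ.A i j = 0) :
    ∀ x ∈ ψ.eval M, (∑ i, l i * ψ.b i) • x = 0 := by
  rintro x ⟨y, hy⟩
  have key : ∑ i, l i • (ψ.b i • x) = ∑ i, l i • (∑ j, ψ.A i j • y j) :=
    Finset.sum_congr rfl fun i _ => by rw [hy i]
  calc (∑ i, l i * ψ.b i) • x
      = ∑ i, l i • (ψ.b i • x) := by
        rw [Finset.sum_smul]; exact Finset.sum_congr rfl fun i _ => by rw [mul_smul]
    _ = ∑ i, ∑ j, (l i * ψ.A i j) • y j := by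
        rw [key]; exact Finset.sum_congr rfl fun i _ => by
          rw [Finset.smul_sum]; exact Finset.sum_congr rfl fun j _ => by rw [mul_smul]
    _ = ∑ j, (∑ i, l i * ψ.A i j) • y j := by
        rw [Finset.sum_comm]; exact Finset.sum_congr rfl fun j _ => by rw [Finset.sum_smul]
    _ = 0 := by simp [hl]

private lemma ppf_cobound {M : Type*} [AddCommGroup M] [Module R M] (ψ : PPFormula R)
    (s : R) (c : Fin ψ.m → R) (hc : ∀ i, ∑ j, ψ.A i j * c j = ψ.b i * s) (x : M) :
    s • x ∈ ψ.eval M := by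
  refine ⟨fun j => c j • x, fun i => ?_⟩
  calc ∑ j, ψ.A i j • (c j • x) = (∑ j, ψ.A i j * c j) • x := by
        rw [Finset.sum_smul]; exact Finset.sum_congr rfl fun j _ => by rw [mul_smul]
    _ = ψ.b i • s • x := by rw [hc i, mul_smul]

/-- The pp formula defining `φ(M) + {z | t • z = 0}`. -/
private def sumAnn (φ : PPFormula R) (t : R) : PPFormula R :=
  ⟨φ.n + 1, φ.m + 1,
    Matrix.of (Fin.cons (Fin.cons t 0) (fun i => Fin.cons (-(φ.b i)) (fun j => φ.A i j))),
    Fin.cons t 0⟩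

private lemma sumAnn_eval {M : Type*} [AddCommGroup M] [Module R M]
    (φ : PPFormula R) (t : R) (x : M) :
    x ∈ (sumAnn φ t).eval M ↔
      ∃ x₁ ∈ φ.eval M, t • (x - x₁) = 0 := by
  show (∃ Y : Fin (φ.m + 1) → M, ∀ i : Fin (φ.n + 1),
      ∑ j, (Fin.cons (Fin.cons t 0)
        (fun i => Fin.cons (-(φ.b i)) (fun j => φ.A i j)) : Fin (φ.n + 1) → Fin (φ.m + 1) → R)
          i j • Y j = (Fin.cons t 0 : Fin (φ.n + 1) → R) i • x) ↔ _
  constructor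
  · rintro ⟨Y, hY⟩
    refine ⟨Y 0, ⟨fun j => Y j.succ, fun i => ?_⟩, ?_⟩
    · have h := hY i.succ
      rw [Fin.sum_univ_succ] at h
      simp only [Fin.cons_succ, Fin.cons_zero, neg_smul, zero_smul, Pi.zero_apply] at h
      exact (neg_add_eq_zero.mp h).symm
    · have h0 := hY 0
      rw [Fin.sum_univ_succ] at h0
      simp only [Fin.cons_succ, Fin.cons_zero, Pi.zero_apply,
        zero_smul, Finset.sum_const_zero, add_zero] at h0
      rw [smul_sub, h0, sub_self]
  · rintro ⟨x₁, ⟨y, hy⟩, hann⟩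
    refine ⟨Fin.cons x₁ y, fun i => ?_⟩
    refine Fin.cases ?_ ?_ i
    · rw [Fin.sum_univ_succ]
      simp only [Fin.cons_succ, Fin.cons_zero, Pi.zero_apply,
        zero_smul, Finset.sum_const_zero, add_zero]
      rw [smul_sub, sub_eq_zero] at hann
      exact hann.symm
    · intro i'
      rw [Fin.sum_univ_succ]
      simp only [Fin.cons_succ, Fin.cons_zero, neg_smul, zero_smul, Pi.zero_apply]
      rw [hy i', neg_add_cancel]

private lemma ore_dichotomy [IsDomain R]
    (leftOre : ∀ a b : R, a ≠ 0 → b ≠ 0 → ∃ u v : R, u * a = v * b ∧ u * a ≠ 0)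
    (rightOre : ∀ a b : R, a ≠ 0 → b ≠ 0 → ∃ u v : R, a * u = b * v ∧ a * u ≠ 0) :
    ∀ (m n : ℕ) (A : Fin n → Fin m → R) (b : Fin n → R),
      (∃ (s : R) (c : Fin m → R), s ≠ 0 ∧ ∀ i, ∑ j, A i j * c j = b i * s) ∨
      (∃ l : Fin n → R, (∀ j, ∑ i, l i * A i j = 0) ∧ ∑ i, l i * b i ≠ 0) := by
  intro m
  induction m with
  | zero =>
    intro n A b
    by_cases hb : ∀ i, b i = 0
    · exact Or.inl ⟨1, Fin.elim0, one_ne_zero, fun i => by simp [hb i]⟩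
    · push_neg at hb
      obtain ⟨i₀, hi₀⟩ := hb
      refine Or.inr ⟨Pi.single i₀ (1 : R), fun j => j.elim0, ?_⟩
      have h1 : ∑ i, (Pi.single i₀ 1 : Fin n → R) i * b i = b i₀ := by
        simp [Pi.single_apply, ite_mul]
      rw [h1]; exact hi₀
  | succ m ih =>
    intro n A b
    by_cases ha : ∀ i, A i 0 = 0
    · rcases ih n (fun i j => A i j.succ) b with ⟨s, c, hs, hc⟩ | ⟨l, hl, hlb⟩
      · refine Or.inl ⟨s, Fin.cons 0 c, hs, fun i => ?_⟩
        rw [Fin.sum_univ_succ]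
        simpa using hc i
      · refine Or.inr ⟨l, fun j => ?_, hlb⟩
        refine Fin.cases ?_ (fun j' => hl j') j
        simp [ha]
    · push_neg at ha
      obtain ⟨i₀, hi₀⟩ := ha
      have hchoice : ∀ i, ∃ u v : R, u ≠ 0 ∧ u * A i 0 = v * A i₀ 0 := by
        intro i
        by_cases h0 : A i 0 = 0
        · exact ⟨1, 0, one_ne_zero, by simp [h0]⟩
        · obtain ⟨u, v, huv, hne⟩ := leftOre _ _ h0 hi₀
          exact ⟨u, v, fun h => hne (by rw [h, zero_mul]), huv⟩
      choose u v hu huv using hchoice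
      rcases ih n (fun i j => u i * A i j.succ - v i * A i₀ j.succ)
          (fun i => u i * b i - v i * b i₀) with ⟨s, c, hs, hc⟩ | ⟨μ, hμ, hμd⟩
      · -- solution case
        have hres : ∀ i, u i * ((∑ j, A i j.succ * c j) - b i * s)
            = v i * ((∑ j, A i₀ j.succ * c j) - b i₀ * s) := by
          intro i
          have h := hc i
          simp only [sub_mul, mul_assoc] at h
          rw [Finset.sum_sub_distrib, ← Finset.mul_sum, ← Finset.mul_sum] at h
          rw [mul_sub, mul_sub]
          exact sub_eq_sub_iff_sub_eq_sub.mp h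
        set w : R := b i₀ * s - ∑ j, A i₀ j.succ * c j with hw_def
        have hSw : (∑ j, A i₀ j.succ * c j) - b i₀ * s = -w := by
          rw [hw_def, neg_sub]
        by_cases hw : w = 0
        · refine Or.inl ⟨s, Fin.cons 0 c, hs, fun i => ?_⟩
          have h0 : (∑ j, A i j.succ * c j) - b i * s = 0 := by
            have h := hres i
            rw [hSw, hw, neg_zero, mul_zero] at h
            rcases mul_eq_zero.mp h with h' | h'
            · exact absurd h' (hu i)
            · exact h'
          rw [Fin.sum_univ_succ]
          simp only [Fin.cons_zero, Fin.cons_succ, mul_zero, zero_add]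
          exact sub_eq_zero.mp h0
        · obtain ⟨p, q, hpq, hpqne⟩ := rightOre (A i₀ 0) w hi₀ hw
          have hq : q ≠ 0 := fun h => hpqne (by rw [hpq, h, mul_zero])
          refine Or.inl ⟨s * q, Fin.cons p (fun j => c j * q), mul_ne_zero hs hq, fun i => ?_⟩
          rw [Fin.sum_univ_succ]
          simp only [Fin.cons_zero, Fin.cons_succ]
          have hsum : ∑ j, A i j.succ * (c j * q) = (∑ j, A i j.succ * c j) * q := by
            rw [Finset.sum_mul]
            exact Finset.sum_congr rfl fun j _ => by rw [mul_assoc]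
          rw [hsum]
          have key : u i * (A i 0 * p + (∑ j, A i j.succ * c j) * q - b i * (s * q)) =
              (u i * A i 0) * p + (u i * ((∑ j, A i j.succ * c j) - b i * s)) * q := by
            noncomm_ring
          rw [huv i, hres i, hSw] at key
          have key2 : (v i * A i₀ 0) * p + (v i * (-w)) * q
              = v i * (A i₀ 0 * p) - v i * (w * q) := by
            noncomm_ring
          rw [key2, hpq, sub_self] at key
          exact sub_eq_zero.mp ((mul_eq_zero.mp key).resolve_left (hu i))
      · -- functional case
        refine Or.inr ⟨fun i => μ i * u i + (if i = i₀ then -(∑ k, μ k * v k) else 0), ?_, ?_⟩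
        · intro j
          have hexp : ∀ g : Fin n → R,
              ∑ i, (μ i * u i + (if i = i₀ then -(∑ k, μ k * v k) else 0)) * g i
                = (∑ i, μ i * (u i * g i)) + (-(∑ k, μ k * v k)) * g i₀ := by
            intro g
            simp only [add_mul, ite_mul, zero_mul]
            rw [Finset.sum_add_distrib,
              Finset.sum_ite_eq' Finset.univ i₀ (fun i => (-(∑ k, μ k * v k)) * g i),
              if_pos (Finset.mem_univ _)]
            congr 1
            exact Finset.sum_congr rfl fun i _ => by rw [mul_assoc]
          refine Fin.cases ?_ ?_ j
          · rw [hexp (fun i => A i 0)]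
            have h1 : ∑ i, μ i * (u i * A i 0) = (∑ i, μ i * v i) * A i₀ 0 := by
              rw [Finset.sum_mul]
              exact Finset.sum_congr rfl fun i _ => by rw [huv i, mul_assoc]
            rw [h1]
            noncomm_ring
          · intro j'
            rw [hexp (fun i => A i j'.succ)]
            have h := hμ j'
            simp only [mul_sub] at h
            rw [Finset.sum_sub_distrib] at h
            have h3 : ∑ i, μ i * (v i * A i₀ j'.succ) = (∑ i, μ i * v i) * A i₀ j'.succ := by
              rw [Finset.sum_mul]
              exact Finset.sum_congr rfl fun i _ => by rw [mul_assoc]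
            rw [h3] at h
            rw [sub_eq_zero.mp h]
            noncomm_ring
        · have hexp : ∑ i, (μ i * u i + (if i = i₀ then -(∑ k, μ k * v k) else 0)) * b i
              = (∑ i, μ i * (u i * b i)) + (-(∑ k, μ k * v k)) * b i₀ := by
            simp only [add_mul, ite_mul, zero_mul]
            rw [Finset.sum_add_distrib,
              Finset.sum_ite_eq' Finset.univ i₀ (fun i => (-(∑ k, μ k * v k)) * b i),
              if_pos (Finset.mem_univ _)]
            congr 1
            exact Finset.sum_congr rfl fun i _ => by rw [mul_assoc]
          rw [hexp]
          have h2 : ∑ i, μ i * (u i * b i - v i * b i₀)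
              = (∑ i, μ i * (u i * b i)) - (∑ i, μ i * v i) * b i₀ := by
            simp only [mul_sub]
            rw [Finset.sum_sub_distrib, Finset.sum_mul]
            congr 1
            exact Finset.sum_congr rfl fun i _ => by rw [mul_assoc]
          intro hcontra
          apply hμd
          rw [h2]
          rw [neg_mul, ← sub_eq_add_neg] at hcontra
          exact hcontra

end Aux

/-- Let `M` be a divisible module over a two-sided Ore domain.  If `M` has a maximal
(proper) pp subgroup, then `M` is pp-simple (every pp subgroup is `0` or `M`) and
torsionfree. -/
theorem ppSimple_torsionfree_of_divisible_with_maximal_ppSubgroup (R : Type*) [Ring R]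
    [IsDomain R]
    (leftOre : ∀ a b : R, a ≠ 0 → b ≠ 0 → ∃ u v : R, u * a = v * b ∧ u * a ≠ 0)
    (rightOre : ∀ a b : R, a ≠ 0 → b ≠ 0 → ∃ u v : R, a * u = b * v ∧ a * u ≠ 0)
    (M : Type*) [AddCommGroup M] [Module R M]
    (divisible : ∀ (r : R), r ≠ 0 → ∀ x : M, ∃ y : M, r • y = x)
    (φ : PPFormula R) (hproper : φ.eval M ≠ Set.univ)
    (hmax : ∀ ψ : PPFormula R, φ.eval M ⊆ ψ.eval M →
      ψ.eval M = φ.eval M ∨ ψ.eval M = Set.univ) :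
    (∀ ψ : PPFormula R, ψ.eval M = ({0} : Set M) ∨ ψ.eval M = Set.univ) ∧
    (∀ (r : R) (x : M), r ≠ 0 → r • x = 0 → x = 0) := by
  classical
  have evalUniv : ∀ (χ : PPFormula R) (s : R) (c : Fin χ.m → R), s ≠ 0 →
      (∀ i, ∑ j, χ.A i j * c j = χ.b i * s) → χ.eval M = Set.univ := by
    intro χ s c hs hc
    apply Set.eq_univ_of_forall
    intro x
    obtain ⟨y, hy⟩ := divisible s hs x
    rw [← hy]
    exact ppf_cobound χ s c hc y
  obtain ⟨l, hl, hlb⟩ : ∃ l : Fin φ.n → R,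
      (∀ j, ∑ i, l i * φ.A i j = 0) ∧ (∑ i, l i * φ.b i) ≠ 0 := by
    rcases ore_dichotomy leftOre rightOre φ.m φ.n (fun i j => φ.A i j) φ.b with
      ⟨s, c, hs, hc⟩ | h
    · exact absurd (evalUniv φ s c hs hc) hproper
    · exact h
  set r₀ : R := ∑ i, l i * φ.b i with hr₀def
  have hkill : ∀ x ∈ φ.eval M, r₀ • x = 0 := ppf_kill φ l hl
  have hr₀ : r₀ ≠ 0 := hlb
  have hM0 : ∃ x₀ : M, x₀ ∉ φ.eval M := by
    by_contra h
    push_neg at h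
    exact hproper (Set.eq_univ_of_forall h)
  have tf : ∀ (r : R) (x : M), r ≠ 0 → r • x = 0 → x = 0 := by
    intro r x hr hrx
    have sub1 : φ.eval M ⊆ (sumAnn φ (r * r₀)).eval M := by
      intro z hz
      rw [sumAnn_eval]
      exact ⟨z, hz, by rw [sub_self, smul_zero]⟩
    rcases hmax (sumAnn φ (r * r₀)) sub1 with heq | huniv
    · obtain ⟨y, hy⟩ := divisible r₀ hr₀ x
      have hy2 : (r * r₀) • y = 0 := by rw [mul_smul, hy, hrx]
      have hyψ : y ∈ (sumAnn φ (r * r₀)).eval M := by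
        rw [sumAnn_eval]
        exact ⟨0, ppf_zero_mem φ, by rw [sub_zero, hy2]⟩
      have hyφ : y ∈ φ.eval M := heq ▸ hyψ
      have hzero := hkill y hyφ
      rw [hy] at hzero
      exact hzero
    · exfalso
      obtain ⟨u', v', huv', hne'⟩ := leftOre r₀ (r * r₀) hr₀ (mul_ne_zero hr hr₀)
      have hall : ∀ z : M, (u' * r₀) • z = 0 := by
        intro z
        have hz : z ∈ (sumAnn φ (r * r₀)).eval M := huniv ▸ Set.mem_univ z
        rw [sumAnn_eval] at hz
        obtain ⟨x₁, hx₁, hx₂⟩ := hz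
        have e1 : (u' * r₀) • x₁ = 0 := by rw [mul_smul, hkill x₁ hx₁, smul_zero]
        have e2 : (u' * r₀) • (z - x₁) = 0 := by rw [huv', mul_smul, hx₂, smul_zero]
        calc (u' * r₀) • z = (u' * r₀) • x₁ + (u' * r₀) • (z - x₁) := by
              rw [← smul_add]; congr 1; abel
          _ = 0 := by rw [e1, e2, add_zero]
      obtain ⟨x₀, hx₀⟩ := hM0
      obtain ⟨y₀, hy₀⟩ := divisible (u' * r₀) hne' x₀
      have hx00 : x₀ = 0 := by rw [← hy₀, hall y₀]
      exact hx₀ (hx00 ▸ ppf_zero_mem φ)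
  refine ⟨?_, tf⟩
  intro χ
  rcases ore_dichotomy leftOre rightOre χ.m χ.n (fun i j => χ.A i j) χ.b with
    ⟨s, c, hs, hc⟩ | ⟨l', hl', hlb'⟩
  · exact Or.inr (evalUniv χ s c hs hc)
  · refine Or.inl (Set.eq_of_subset_of_subset ?_ ?_)
    · intro x hx
      exact Set.mem_singleton_iff.mpr (tf _ x hlb' (ppf_kill χ l' hl' x hx))
    · intro x hx
      rw [Set.mem_singleton_iff.mp hx]
      exact ppf_zero_mem χ
end
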